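/- Identifiability of the Kronecker factorization under a trace constraint: if U₁, U₂ are p×p positive definite, V₁, V₂ are q×q positive definite with tr(V₁) = tr(V₂) = q, and V₁ ⊗ U₁ = V₂ ⊗ U₂, then V₁ = V₂ and U₁ = U₂. -/

import Mathlib

open Matrix
open scoped Kronecker

lemma posdef_diag_pos {n : ℕ} {M : Matrix (Fin n) (Fin n) ℝ} (hM : M.PosDef)
    (i : Fin n) : 0 < M i i := by
  have := hM.dotProduct_mulVec_pos (x := Pi.single i 1) (by intro hz; simpa using congrFun hz i)
  simpa [dotProduct, mulVec, Pi.single_apply] using this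

/-- identifiability of the Kronecker factorization under a
trace constraint. -/
theorem kronecker_identifiable_of_trace_constraint (p q : ℕ)
    (hp : 1 ≤ p) (hq : 1 ≤ q)
    (U₁ U₂ : Matrix (Fin p) (Fin p) ℝ) (V₁ V₂ : Matrix (Fin q) (Fin q) ℝ)
    (hU₁ : U₁.PosDef) (hU₂ : U₂.PosDef) (hV₁ : V₁.PosDef) (hV₂ : V₂.PosDef)
    (htr₁ : V₁.trace = (q : ℝ)) (htr₂ : V₂.trace = (q : ℝ))
    (h : V₁ ⊗ₖ U₁ = V₂ ⊗ₖ U₂) :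
    V₁ = V₂ ∧ U₁ = U₂ := by
  have hent : ∀ i k : Fin q, ∀ j l : Fin p, V₁ i k * U₁ j l = V₂ i k * U₂ j l := by
    intro i k j l
    have := congrFun (congrFun h (i, j)) (k, l)
    simpa [Matrix.kroneckerMap_apply] using this
  have hqpos : (0 : ℝ) < q := by exact_mod_cast hq
  have hU : U₁ = U₂ := by
    ext j l
    have hsum : ∑ i : Fin q, V₁ i i * U₁ j l = ∑ i : Fin q, V₂ i i * U₂ j l :=
      Finset.sum_congr rfl fun i _ => hent i i j l
    rw [← Finset.sum_mul, ← Finset.sum_mul] at hsum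
    have h1 : ∑ i : Fin q, V₁ i i = (q : ℝ) := htr₁
    have h2 : ∑ i : Fin q, V₂ i i = (q : ℝ) := htr₂
    rw [h1, h2] at hsum
    exact mul_left_cancel₀ hqpos.ne' hsum
  refine ⟨?_, hU⟩
  obtain ⟨j⟩ : Nonempty (Fin p) := ⟨⟨0, hp⟩⟩
  have hUpos := posdef_diag_pos hU₁ j
  ext i k
  have := hent i k j j
  rw [hU] at this
  exact mul_right_cancel₀ (posdef_diag_pos hU₂ j).ne' this
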